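/- Fix ξ₁, ξ₂ ∈ ℂ. Let U ⊆ ℂ be open and let x, y : U → ℂ be differentiable functions satisfying the van der Put–Top PIV system on U, such that y(s) ≠ 0 for all s ∈ U. Then the function f(s) := −i/y(s) satisfies the Painlevé IV equation in the time variable t = −3is/2 with parameters α = 1 − 3ξ₁/2 + 2ξ₂ and β = −ξ₁²/2; precisely, the function F(s) := (2i/3)·f'(s) (the t-derivative of f along t = −3is/2) is differentiable on U and for every s ∈ U, (2i/3)·F'(s) = (1/(2f(s)))·F(s)² + (3/2)f(s)³ + 4t(s)f(s)² + 2(t(s)²−α)f(s) + β/f(s), where t(s) = −3is/2 and i is the imaginary unit. -/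

import Mathlib

open Complex

/-- Right-hand side of the `x`-equation of the van der Put–Top PIV system. -/
noncomputable def vdPT4Rx (ξ₁ ξ₂ : ℂ) (s x y : ℂ) : ℂ :=
  (3 / 2) * (2 * ξ₂ - ξ₁) * (ξ₁ - ξ₂) + (9 * s / 2) * x
    + (12 * ξ₂ - 9 * ξ₁) * x * y - 9 * x ^ 2 * y ^ 2

/-- Right-hand side of the `y`-equation of the van der Put–Top PIV system. -/
noncomputable def vdPT4Ry (ξ₁ ξ₂ : ℂ) (s x y : ℂ) : ℂ :=
  -3 / 2 + 6 * x * y ^ 3 + ((9 * ξ₁ - 12 * ξ₂) / 2) * y ^ 2 - (9 / 2) * y * s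

set_option maxHeartbeats 2000000 in
/-- solutions of the van der Put–Top PIV system give, via
`f = -i/y` and `t = -3is/2`, solutions of the Painlevé IV equation with
parameters α = 1 - 3ξ₁/2 + 2ξ₂, β = -ξ₁²/2.  Under `t = -3is/2` the
`t`-derivative becomes `(2i/3)·d/ds`. -/
theorem vdPT_solves_PIV
    (ξ₁ ξ₂ : ℂ) (U : Set ℂ) (hU : IsOpen U) (x y : ℂ → ℂ)
    (hreg : ∀ s ∈ U, y s ≠ 0)
    (hx : ∀ s ∈ U, HasDerivAt x (vdPT4Rx ξ₁ ξ₂ s (x s) (y s)) s)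
    (hy : ∀ s ∈ U, HasDerivAt y (vdPT4Ry ξ₁ ξ₂ s (x s) (y s)) s) :
    ∀ s ∈ U,
      DifferentiableAt ℂ
        (fun s' => (2 * I / 3) * deriv (fun s'' => -I / y s'') s') s ∧
      (2 * I / 3) * deriv
          (fun s' => (2 * I / 3) * deriv (fun s'' => -I / y s'') s') s
        = (1 / (2 * (-I / y s)))
              * ((2 * I / 3) * deriv (fun s'' => -I / y s'') s) ^ 2
            + (3 / 2) * (-I / y s) ^ 3
            + 4 * (-3 * I * s / 2) * (-I / y s) ^ 2
            + 2 * ((-3 * I * s / 2) ^ 2 - (1 - 3 * ξ₁ / 2 + 2 * ξ₂)) * (-I / y s)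
            + (-(ξ₁ ^ 2) / 2) / (-I / y s) := by
  have key : ∀ u ∈ U, HasDerivAt (fun s'' => -I / y s'')
      (I * vdPT4Ry ξ₁ ξ₂ u (x u) (y u) / (y u) ^ 2) u := by
    intro u hu
    have h := ((hy u hu).inv (hreg u hu)).const_mul (-I)
    have heq : -I * (-(vdPT4Ry ξ₁ ξ₂ u (x u) (y u)) / (y u) ^ 2)
        = I * vdPT4Ry ξ₁ ξ₂ u (x u) (y u) / (y u) ^ 2 := by ring
    rw [heq] at h
    simpa [div_eq_mul_inv] using h
  intro s hs
  have hys := hreg s hs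
  have hx' := hx s hs
  have hy' := hy s hs
  -- derivative of the numerator N s' = I * vdPT4Ry ξ₁ ξ₂ s' (x s') (y s')
  have hN : HasDerivAt (fun s' => I * vdPT4Ry ξ₁ ξ₂ s' (x s') (y s'))
      (I * ((6 * vdPT4Rx ξ₁ ξ₂ s (x s) (y s) * (y s) ^ 3
          + 6 * x s * (3 * (y s) ^ 2 * vdPT4Ry ξ₁ ξ₂ s (x s) (y s)))
        + (9 * ξ₁ - 12 * ξ₂) / 2 * (2 * (y s) ^ 1 * vdPT4Ry ξ₁ ξ₂ s (x s) (y s))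
        - (9 / 2 * vdPT4Ry ξ₁ ξ₂ s (x s) (y s) * s + 9 / 2 * y s * 1))) s := by
    have h := (((((hx'.const_mul (6:ℂ)).mul (hy'.pow 3)).const_add (-3/2)).add
        ((hy'.pow 2).const_mul ((9 * ξ₁ - 12 * ξ₂) / 2))).sub
        ((hy'.const_mul ((9:ℂ)/2)).mul (hasDerivAt_id s))).const_mul I
    simp only [vdPT4Ry]
    simp only [Pi.pow_apply, Pi.mul_apply, Pi.add_apply, Pi.sub_apply, id, Nat.cast_ofNat] at h
    exact h.congr_deriv (by simp only [vdPT4Ry])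
  have hD := hy'.pow 2
  have hG := (hN.div hD (pow_ne_zero 2 hys)).const_mul (2 * I / 3)
  have hFG : (fun s' => (2 * I / 3) * deriv (fun s'' => -I / y s'') s')
      =ᶠ[nhds s] (fun s' => (2 * I / 3)
        * (I * vdPT4Ry ξ₁ ξ₂ s' (x s') (y s') / (y s') ^ 2)) := by
    filter_upwards [hU.mem_nhds hs] with u hu
    rw [(key u hu).deriv]
  have hF := hG.congr_of_eventuallyEq hFG
  refine ⟨hF.differentiableAt, ?_⟩
  rw [hF.deriv, (key s hs).deriv]
  simp only [vdPT4Rx, vdPT4Ry, Pi.pow_apply, Nat.cast_ofNat, show (2:ℕ) - 1 = 1 from rfl]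
  have hw : y s * (y s)⁻¹ = 1 := mul_inv_cancel₀ hys
  simp only [div_eq_mul_inv, mul_inv, inv_pow, inv_inv, inv_neg, Complex.inv_I, neg_neg]
  linear_combination ((9/2) * I * (y s)⁻¹ * s^2  +  6 * I * (y s)⁻¹^2 * s  +  (3/2) * I * (y s)⁻¹^3  +  (-3/2) * I * y s * (y s)⁻¹^4  +  -6 * I * y s^2 * (y s)⁻¹^4 * s  +  -2 * I * y s^3 * (y s)⁻¹^4  +  -4 * I * y s^3 * (y s)⁻¹^4 * ξ₂  +  3 * I * y s^3 * (y s)⁻¹^4 * ξ₁  +  (-9/2) * I * y s^3 * (y s)⁻¹^4 * s^2  +  (1/2) * I * y s^5 * (y s)⁻¹^4 * ξ₁^2  +  (-1/2) * I^3 * y s * (y s)⁻¹^4  +  -3 * I^3 * y s^2 * (y s)⁻¹^4 * s  +  -4 * I^3 * y s^3 * (y s)⁻¹^4 * ξ₂  +  3 * I^3 * y s^3 * (y s)⁻¹^4 * ξ₁  +  (-9/2) * I^3 * y s^3 * (y s)⁻¹^4 * s^2  +  -12 * I^3 * y s^4 * (y s)⁻¹^4 * s * ξ₂  +  9 * I^3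 * y s^4 * (y s)⁻¹^4 * s * ξ₁  +  4 * I^3 * y s^4 * (y s)⁻¹^4 * x s  +  -8 * I^3 * y s^5 * (y s)⁻¹^4 * ξ₂^2  +  12 * I^3 * y s^5 * (y s)⁻¹^4 * ξ₁ * ξ₂  +  (-9/2) * I^3 * y s^5 * (y s)⁻¹^4 * ξ₁^2  +  12 * I^3 * y s^5 * (y s)⁻¹^4 * x s * s  +  16 * I^3 * y s^6 * (y s)⁻¹^4 * x s * ξ₂  +  -12 * I^3 * y s^6 * (y s)⁻¹^4 * x s * ξ₁  +  -8 * I^3 * y s^7 * (y s)⁻¹^4 * x s^2) * Complex.I_sq + (2 * I * (y s)⁻¹  +  4 * I * (y s)⁻¹ * ξ₂  +  -3 * I * (y s)⁻¹ * ξ₁  +  (9/2) * I * (y s)⁻¹ * s^2  +  6 * I * (y s)⁻¹^2 * s  +  (3/2) * I * (y s)⁻¹^3  +  (-1/2) * I * y s * ξ₁^2  +  2 * I * y s * (y s)⁻¹^2  +  4 * I * y s * (y s)⁻¹^2 * ξ₂  +  -3 * I * y s * (y s)⁻¹^2 * ξ₁  +  (9/2) * I * y s * (y s)⁻¹^2 *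 s^2  +  6 * I * y s * (y s)⁻¹^3 * s  +  (-1/2) * I * y s^2 * (y s)⁻¹ * ξ₁^2  +  2 * I * y s^2 * (y s)⁻¹^3  +  4 * I * y s^2 * (y s)⁻¹^3 * ξ₂  +  -3 * I * y s^2 * (y s)⁻¹^3 * ξ₁  +  (9/2) * I * y s^2 * (y s)⁻¹^3 * s^2  +  (-1/2) * I * y s^3 * (y s)⁻¹^2 * ξ₁^2  +  (-1/2) * I * y s^4 * (y s)⁻¹^3 * ξ₁^2) * hw
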